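/- Let K ⊆ L be fields with K relatively algebraically closed in L (every element of L algebraic over K lies in K), and let α be separable algebraic over K. Then K(α) is relatively algebraically closed in L(α). -/

import Mathlib

set_option maxHeartbeats 1000000
set_option synthInstance.maxHeartbeats 100000
open Polynomial IntermediateField

lemma coeffs_algebraic_of_monic_dvd {F E : Type*} [Field F] [Field E] [Algebra F E]
    [IsAlgClosed E] {p : F[X]} (hp : p ≠ 0) {q : Polynomial E} (hq : q.Monic)
    (hdvd : q ∣ p.map (algebraMap F E)) (i : ℕ) : IsAlgebraic F (q.coeff i) := by
  have hpE : p.map (algebraMap F E) ≠ 0 :=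
    (Polynomial.map_ne_zero_iff (algebraMap F E).injective).2 hp
  have hsplit : q.Splits :=
    (IsAlgClosed.splits _).of_dvd hpE hdvd
  have hroots : ∀ r ∈ q.roots, IsAlgebraic F r := by
    intro r hr
    have hr' : r ∈ (p.map (algebraMap F E)).roots :=
      Multiset.mem_of_le (Polynomial.roots.le_of_dvd hpE hdvd) hr
    have : Polynomial.aeval r p = 0 := by
      have := Polynomial.isRoot_of_mem_roots hr'
      rwa [Polynomial.IsRoot, Polynomial.eval_map, ← Polynomial.aeval_def] at this
    exact ⟨p, hp, this⟩
  set A : IntermediateField F E := algebraicClosure F E with hA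
  have hmemA : ∀ r ∈ q.roots, r ∈ A := fun r hr =>
    (mem_algebraicClosure_iff).2 (hroots r hr)
  rcases le_or_gt i q.natDegree with hi | hi
  · have h := Polynomial.coeff_eq_esymm_roots_of_splits hsplit hi
    rw [hq.leadingCoeff, one_mul] at h
    rw [h]
    have hesymm : q.roots.esymm (q.natDegree - i) ∈ A := by
      unfold Multiset.esymm
      refine multiset_sum_mem _ ?_
      intro a ha
      simp only [Multiset.mem_map] at ha
      obtain ⟨t, ht, rfl⟩ := ha
      exact multiset_prod_mem t (fun b hb =>
        hmemA b (Multiset.mem_of_le (Multiset.mem_powersetCard.1 ht).1 hb))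
    have : ((-1 : E)) ^ (q.natDegree - i) * q.roots.esymm (q.natDegree - i) ∈ A :=
      mul_mem (pow_mem (neg_mem (one_mem A)) _) hesymm
    exact (mem_algebraicClosure_iff).1 this
  · rw [Polynomial.coeff_eq_zero_of_natDegree_lt hi]
    exact isAlgebraic_zero

lemma minpoly_map_of_relClosed {F M : Type*} [Field F] [Field M] [Algebra F M]
    (L' : IntermediateField F M)
    (hrel : ∀ y ∈ L', IsAlgebraic F y → y ∈ (⊥ : IntermediateField F M))
    {z : M} (hz : IsIntegral F z) :
    minpoly (↥L') z = (minpoly F z).map (algebraMap F ↥L') := by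
  set p := minpoly F z with hp
  have hz' : IsIntegral ↥L' z := hz.tower_top
  set q := minpoly (↥L') z with hqdef
  have hqmonic : q.Monic := minpoly.monic hz'
  have hpmonic : p.Monic := minpoly.monic hz
  have hp0 : p ≠ 0 := hpmonic.ne_zero
  have hqdvd : q ∣ p.map (algebraMap F ↥L') := by
    apply minpoly.dvd
    rw [Polynomial.aeval_map_algebraMap]
    exact minpoly.aeval F z
  set qM : M[X] := q.map (algebraMap ↥L' M) with hqM
  have hinj : Function.Injective (algebraMap ↥L' M) := Subtype.val_injective
  have hqMmonic : qM.Monic := hqmonic.map _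
  have hqMdvd : qM ∣ p.map (algebraMap F M) := by
    have := Polynomial.map_dvd (algebraMap ↥L' M) hqdvd
    rwa [Polynomial.map_map, ← IsScalarTower.algebraMap_eq] at this
  have hcoef : ∀ i, IsAlgebraic F (qM.coeff i) := by
    intro i
    have hdvdE : qM.map (algebraMap M (AlgebraicClosure M)) ∣
        p.map (algebraMap F (AlgebraicClosure M)) := by
      obtain ⟨c, hc⟩ := hqMdvd
      refine ⟨c.map (algebraMap M (AlgebraicClosure M)), ?_⟩
      rw [← Polynomial.map_mul, ← hc, Polynomial.map_map, ← IsScalarTower.algebraMap_eq]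
    have := coeffs_algebraic_of_monic_dvd hp0
      (hqMmonic.map (algebraMap M (AlgebraicClosure M))) hdvdE i
    rw [Polynomial.coeff_map] at this
    exact (isAlgebraic_algebraMap_iff (algebraMap M (AlgebraicClosure M)).injective).1 this
  have hlift : ∃ r : F[X], r.map (algebraMap F M) = qM := by
    rw [← Polynomial.mem_lifts]
    apply (Polynomial.lifts_iff_coeff_lifts qM).2
    intro n
    have h1 : qM.coeff n ∈ L' := by
      rw [hqM, Polynomial.coeff_map]; exact (q.coeff n).2
    have := hrel _ h1 (hcoef n)
    rw [IntermediateField.mem_bot] at this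
    exact this
  obtain ⟨r, hr⟩ := hlift
  have hrmonic : r.Monic := by
    have : (r.map (algebraMap F M)).Monic := hr ▸ hqMmonic
    exact Polynomial.monic_of_injective (algebraMap F M).injective this
  have hzr : Polynomial.aeval z r = 0 := by
    have : Polynomial.aeval z (r.map (algebraMap F M)) = 0 := by
      rw [hr, hqM, Polynomial.aeval_map_algebraMap]
      exact minpoly.aeval _ z
    rwa [Polynomial.aeval_map_algebraMap] at this
  have hpr : p ∣ r := minpoly.dvd F z hzr
  have hprM : p.map (algebraMap F M) ∣ qM := by
    rw [← hr]; exact Polynomial.map_dvd _ hpr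
  have heq : qM = p.map (algebraMap F M) :=
    Polynomial.eq_of_monic_of_associated hqMmonic (hpmonic.map _)
      (associated_of_dvd_dvd hqMdvd hprM)
  apply Polynomial.map_injective (algebraMap ↥L' M) hinj
  rw [← hqM, heq, Polynomial.map_map, ← IsScalarTower.algebraMap_eq]

theorem main_types {F M : Type*} [Field F] [Field M] [Algebra F M]
    (L' : IntermediateField F M)
    (hrel : ∀ y ∈ L', IsAlgebraic F y → y ∈ (⊥ : IntermediateField F M))
    (α : M) (hsep : (minpoly F α).Separable) :
    ∀ x : M, x ∈ adjoin ↥L' ({α} : Set M) → IsAlgebraic ↥(adjoin F ({α} : Set M)) x →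
      x ∈ adjoin F ({α} : Set M) := by
  intro x hx hxalg
  classical
  have hα : IsIntegral F α := by
    by_contra h
    exact Polynomial.not_separable_zero (minpoly.eq_zero h ▸ hsep)
  set p := minpoly F α with hpdef
  set n := p.natDegree with hndef
  have hα' : IsIntegral ↥L' α := hα.tower_top
  have hminL : minpoly ↥L' α = p.map (algebraMap F ↥L') :=
    minpoly_map_of_relClosed L' hrel hα
  set pb := IntermediateField.adjoin.powerBasis hα' with hpbdef
  set d := pb.dim with hddef
  have hgen : pb.gen = AdjoinSimple.gen ↥L' α := rfl
  have hd : d = n := by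
    rw [hddef, hpbdef, IntermediateField.adjoin.powerBasis_dim, hminL,
      Polynomial.natDegree_map]
  -- x as an element of L'⟮α⟯
  set x' : ↥(L'⟮α⟯) := ⟨x, hx⟩ with hx'def
  -- x is algebraic over F
  set Kα : IntermediateField F M := adjoin F ({α} : Set M) with hKαdef
  haveI : FiniteDimensional F ↥Kα := IntermediateField.adjoin.finiteDimensional hα
  haveI : Algebra.IsIntegral F ↥Kα := Algebra.IsIntegral.of_finite F ↥Kα
  have hxF : IsIntegral F x := isIntegral_trans (A := ↥Kα) x hxalg.isIntegral
  -- the ambient algebraically closed field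
  set Ω := AlgebraicClosure M with hΩdef
  set pΩ := p.map (algebraMap F Ω) with hpΩdef
  have hpΩ0 : pΩ ≠ 0 :=
    (Polynomial.map_ne_zero_iff (algebraMap F Ω).injective).2 (minpoly.ne_zero hα)
  have hcard : pΩ.roots.toFinset.card = d := by
    have hn : Multiset.card pΩ.roots = n :=
      by rw [← (IsAlgClosed.splits pΩ).natDegree_eq_card_roots, hpΩdef, Polynomial.natDegree_map]
    rw [Multiset.toFinset_card_of_nodup (Polynomial.nodup_roots (hsep.map)), hn, hd]
  set e := Finset.equivFinOfCardEq hcard with hedef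
  set αs : Fin d → Ω := fun j => ((e.symm j : pΩ.roots.toFinset) : Ω) with hαsdef
  have hαs_root : ∀ j, (αs j) ∈ pΩ.roots := fun j => Multiset.mem_toFinset.1 (e.symm j).2
  have hαs_inj : Function.Injective αs :=
    Subtype.val_injective.comp (e.symm.injective)
  have hαs_alg : ∀ j, IsAlgebraic F (αs j) := by
    intro j
    refine ⟨p, minpoly.ne_zero hα, ?_⟩
    have := Polynomial.isRoot_of_mem_roots (hαs_root j)
    rwa [Polynomial.IsRoot, hpΩdef, Polynomial.eval_map, ← Polynomial.aeval_def] at this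
  -- the embeddings
  have hroot : ∀ j, Polynomial.aeval (αs j) (minpoly ↥L' pb.gen) = 0 := by
    intro j
    rw [hgen, minpoly_gen, hminL, Polynomial.aeval_map_algebraMap]
    have := Polynomial.isRoot_of_mem_roots (hαs_root j)
    rwa [Polynomial.IsRoot, hpΩdef, Polynomial.eval_map, ← Polynomial.aeval_def] at this
  set σ : Fin d → (↥(L'⟮α⟯) →ₐ[↥L'] Ω) := fun j => pb.lift (αs j) (hroot j) with hσdef
  have hσgen : ∀ j, σ j pb.gen = αs j := fun j => pb.lift_gen _ _
  set s : Fin d → Ω := fun j => σ j x' with hsdef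
  -- s j is algebraic over F
  have hs_alg : ∀ j, IsAlgebraic F (s j) := by
    intro j
    set r0 := minpoly F x with hr0def
    refine ⟨r0, minpoly.ne_zero hxF, ?_⟩
    have h1 : Polynomial.aeval x' (r0.map (algebraMap F ↥L')) = 0 := by
      apply (algebraMap (↥((↥L')⟮α⟯)) M).injective
      rw [map_zero, ← Polynomial.aeval_algebraMap_apply]
      have hxx : algebraMap (↥((↥L')⟮α⟯)) M x' = x := rfl
      rw [hxx, Polynomial.aeval_map_algebraMap]
      exact minpoly.aeval F x
    have h2 : Polynomial.aeval (s j) (r0.map (algebraMap F ↥L')) = 0 := by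
      rw [hsdef]
      simp only
      rw [Polynomial.aeval_algHom_apply, h1, map_zero]
    rwa [Polynomial.aeval_map_algebraMap] at h2
  -- coefficients
  set c : Fin d → ↥L' := fun i => pb.basis.repr x' i with hcdef
  have hxrepr : x' = ∑ i : Fin d, c i • pb.gen ^ (i : ℕ) := by
    conv_lhs => rw [← pb.basis.sum_repr x']
    refine Finset.sum_congr rfl fun i _ => ?_
    rw [pb.coe_basis]
  have hxsum : x = ∑ i : Fin d, ((c i : M)) * α ^ (i : ℕ) := by
    have h := congrArg ((↥L')⟮α⟯).val hxrepr
    rw [map_sum] at h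
    have hx'val : ((↥L')⟮α⟯).val x' = x := rfl
    rw [hx'val] at h
    rw [h]
    refine Finset.sum_congr rfl fun i _ => ?_
    rw [Algebra.smul_def, map_mul, map_pow]
    have h1 : (↥L')⟮α⟯.val ((algebraMap ↥L' ↥((↥L')⟮α⟯)) (c i)) = ((c i : M)) :=
      ((↥L')⟮α⟯).val.commutes (c i)
    have h2 : (↥L')⟮α⟯.val pb.gen = α := by
      rw [hgen]; exact IntermediateField.AdjoinSimple.coe_gen ↥L' α
    rw [h1, h2]
  have hssum : ∀ j, s j = ∑ i : Fin d, (algebraMap ↥L' Ω (c i)) * (αs j) ^ (i : ℕ) := by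
    intro j
    rw [hsdef]
    simp only
    rw [hxrepr, map_sum]
    refine Finset.sum_congr rfl fun i _ => ?_
    rw [Algebra.smul_def, map_mul, map_pow, hσgen]
    congr 1
    exact (σ j).commutes (c i)
  -- the system of equations in Ω
  set cΩ : Fin d → Ω := fun i => algebraMap M Ω ((c i : M)) with hcΩdef
  have hcΩ : ∀ i, cΩ i = algebraMap ↥L' Ω (c i) := by
    intro i
    rw [hcΩdef]
    simp only
    rw [IsScalarTower.algebraMap_apply ↥L' M Ω]
    rfl
  have hsys : (Matrix.vandermonde αs).mulVec cΩ = s := by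
    funext j
    rw [Matrix.mulVec, dotProduct]
    rw [hssum j]
    refine Finset.sum_congr rfl fun i _ => ?_
    rw [Matrix.vandermonde, hcΩ i]
    simp [mul_comm]
  -- the algebraic closure of F in Ω
  set A : IntermediateField F Ω := algebraicClosure F Ω with hAdef
  set β : Fin d → ↥A := fun j => ⟨αs j, (mem_algebraicClosure_iff).2 (hαs_alg j)⟩ with hβdef
  set t : Fin d → ↥A := fun j => ⟨s j, (mem_algebraicClosure_iff).2 (hs_alg j)⟩ with htdef
  have hβ_inj : Function.Injective β := by
    intro i j hij
    have h2 : (β i : Ω) = (β j : Ω) := congrArg Subtype.val hij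
    exact hαs_inj h2
  set V' : Matrix (Fin d) (Fin d) ↥A := Matrix.vandermonde β with hV'def
  have hdet' : V'.det ≠ 0 := by
    rw [hV'def, Matrix.det_vandermonde]
    refine Finset.prod_ne_zero_iff.2 fun i _ => Finset.prod_ne_zero_iff.2 fun j hj => ?_
    rw [sub_ne_zero]
    intro h
    have := hβ_inj h
    rw [this] at hj
    exact absurd rfl (Finset.mem_Ioi.1 hj).ne'
  have hunit : IsUnit V'.det := isUnit_iff_ne_zero.2 hdet'
  set c'' : Fin d → ↥A := (V'⁻¹).mulVec t with hc''def
  have hVc : V'.mulVec c'' = t := by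
    rw [hc''def, Matrix.mulVec_mulVec, Matrix.mul_nonsing_inv _ hunit, Matrix.one_mulVec]
  -- map down to Ω and compare
  have hmap : (Matrix.vandermonde αs).mulVec (fun i => (algebraMap ↥A Ω) (c'' i)) = s := by
    funext j
    rw [Matrix.mulVec, dotProduct]
    have := congrArg (fun v => algebraMap ↥A Ω (v j)) hVc
    rw [Matrix.mulVec, dotProduct, map_sum] at this
    have ht : algebraMap ↥A Ω (t j) = s j := rfl
    rw [ht] at this
    rw [← this]
    refine Finset.sum_congr rfl fun i _ => ?_
    rw [map_mul]
    congr 1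
  have hdetΩ : (Matrix.vandermonde αs).det ≠ 0 := by
    rw [Matrix.det_vandermonde]
    refine Finset.prod_ne_zero_iff.2 fun i _ => Finset.prod_ne_zero_iff.2 fun j hj => ?_
    rw [sub_ne_zero]
    intro h
    have := hαs_inj h
    rw [this] at hj
    exact absurd rfl (Finset.mem_Ioi.1 hj).ne'
  have hunitΩ : IsUnit (Matrix.vandermonde αs).det := isUnit_iff_ne_zero.2 hdetΩ
  have hceq : (fun i => (algebraMap ↥A Ω) (c'' i)) = cΩ := by
    have h1 := hmap.trans hsys.symm
    have h2 := congrArg (fun v => ((Matrix.vandermonde αs)⁻¹).mulVec v) h1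
    rwa [Matrix.mulVec_mulVec, Matrix.mulVec_mulVec, Matrix.nonsing_inv_mul _ hunitΩ,
      Matrix.one_mulVec, Matrix.one_mulVec] at h2
  -- conclude each c i is algebraic over F
  have hc_alg : ∀ i, IsAlgebraic F ((c i : M)) := by
    intro i
    have : cΩ i ∈ A := by
      rw [← hceq]
      exact (c'' i).2
    rw [hAdef, mem_algebraicClosure_iff] at this
    rw [hcΩdef] at this
    exact (isAlgebraic_algebraMap_iff (algebraMap M Ω).injective).1 this
  -- conclude
  rw [hxsum]
  refine sum_mem fun i _ => ?_
  have hci : ((c i : M)) ∈ adjoin F ({α} : Set M) := by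
    have h := hrel _ (c i).2 (hc_alg i)
    rw [IntermediateField.mem_bot] at h
    obtain ⟨y, hy⟩ := h
    rw [← hy]
    exact (adjoin F ({α} : Set M)).algebraMap_mem y
  exact mul_mem hci (pow_mem (IntermediateField.mem_adjoin_simple_self F α) _)

/-- Let `K ⊆ L` be subfields of a field `M`, with `K` relatively algebraically closed in
`L` (every element of `L` algebraic over `K` lies in `K`), and let `α ∈ M` be separable
algebraic over `K`. Then `K(α)` is relatively algebraically closed in `L(α)`. -/
theorem adjoin_separable_preserves_relatively_algebraically_closed
    {M : Type*} [Field M] (K L : Subfield M) (hKL : K ≤ L)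
    (hrel : ∀ x : M, x ∈ L → IsAlgebraic K x → x ∈ K)
    (α : M) (hsep : (minpoly K α).Separable) :
    ∀ x : M, x ∈ Subfield.closure ((L : Set M) ∪ {α}) →
      IsAlgebraic (Subfield.closure ((K : Set M) ∪ {α})) x →
      x ∈ Subfield.closure ((K : Set M) ∪ {α}) := by
  intro x hx hxalg
  have hrange : Set.range (algebraMap ↥K M) = (K : Set M) :=
    Set.ext fun y => ⟨fun ⟨z, hz⟩ => hz ▸ z.2, fun hy => ⟨⟨y, hy⟩, rfl⟩⟩
  set L' : IntermediateField ↥K M := Subfield.toIntermediateField L (fun z => hKL z.2) with hL'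
  have h3 : Set.range (algebraMap ↥L' M) = (L : Set M) :=
    Set.ext fun y => ⟨fun ⟨z, hz⟩ => hz ▸ z.2, fun hy => ⟨⟨y, hy⟩, rfl⟩⟩
  have hKsub : Subfield.closure ((K : Set M) ∪ {α}) = (adjoin ↥K ({α} : Set M)).toSubfield := by
    rw [show (adjoin ↥K ({α} : Set M)).toSubfield
      = Subfield.closure (Set.range (algebraMap ↥K M) ∪ {α}) from rfl, hrange]
  have hLsub : Subfield.closure ((L : Set M) ∪ {α}) = (adjoin ↥L' ({α} : Set M)).toSubfield := by
    rw [show (adjoin ↥L' ({α} : Set M)).toSubfield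
      = Subfield.closure (Set.range (algebraMap ↥L' M) ∪ {α}) from rfl, h3]
  have hrel' : ∀ y ∈ L', IsAlgebraic ↥K y → y ∈ (⊥ : IntermediateField ↥K M) := by
    intro y hy hyalg
    have hyK := hrel y hy hyalg
    rw [IntermediateField.mem_bot, hrange]
    exact hyK
  have hx' : x ∈ adjoin ↥L' ({α} : Set M) := by
    rw [hLsub] at hx; exact hx
  have hxalg' : IsAlgebraic ↥(adjoin ↥K ({α} : Set M)) x := by
    rw [hKsub] at hxalg; exact hxalg
  have hmem := main_types L' hrel' α hsep x hx' hxalg'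
  rw [hKsub]
  exact hmem
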